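/- Every unicyclic graph G has an edge e on its unique cycle C with μ(G − e) = μ(G). -/
import Mathlib


/-- A set of vertices is independent if no two of its vertices are adjacent. -/
def SimpleGraph.IsIndepSet' {V : Type*} (G : SimpleGraph V) (s : Set V) : Prop :=
  s.Pairwise (fun a b => ¬ G.Adj a b)

/-- The independence number: the maximum cardinality of an independent set. -/
noncomputable def indepNum {V : Type*} (G : SimpleGraph V) : ℕ :=
  sSup {n | ∃ s : Set V, G.IsIndepSet' s ∧ s.ncard = n}

/-- The matching number: the maximum cardinality of a matching. -/
noncomputable def matchNum {V : Type*} (G : SimpleGraph V) : ℕ :=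
  sSup {n | ∃ M : SimpleGraph.Subgraph G, M.IsMatching ∧ M.edgeSet.ncard = n}

/-- A maximum independent set. -/
def IsMaxIndepSet {V : Type*} (G : SimpleGraph V) (s : Set V) : Prop :=
  G.IsIndepSet' s ∧ s.ncard = indepNum G

/-- The core: intersection of all maximum independent sets. -/
noncomputable def core {V : Type*} (G : SimpleGraph V) : Set V :=
  ⋂₀ {s | IsMaxIndepSet G s}

/-- Open neighborhood of a set. -/
def nbhdSet {V : Type*} (G : SimpleGraph V) (s : Set V) : Set V :=
  {v | ∃ w ∈ s, G.Adj v w}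

/-- Closed neighborhood of a set. -/
def closedNbhdSet {V : Type*} (G : SimpleGraph V) (s : Set V) : Set V :=
  s ∪ nbhdSet G s

/-- The tree component of `G - xy` containing `x`. -/
noncomputable def treeComp {V : Type*} (G : SimpleGraph V) (x y : V) :
    SimpleGraph ((G.deleteEdges {s(x,y)}).connectedComponentMk x).supp :=
  (G.deleteEdges {s(x,y)}).induce ((G.deleteEdges {s(x,y)}).connectedComponentMk x).supp



section Aux

open SimpleGraph

lemma matchSet_nonempty {V : Type*} (G : SimpleGraph V) :
    Set.Nonempty {n | ∃ M : SimpleGraph.Subgraph G, M.IsMatching ∧ M.edgeSet.ncard = n} :=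
  ⟨0, ⊥, fun v hv => by simp at hv, by simp⟩

lemma matchSet_bdd {V : Type*} [Fintype V] (G : SimpleGraph V) :
    BddAbove {n | ∃ M : SimpleGraph.Subgraph G, M.IsMatching ∧ M.edgeSet.ncard = n} := by
  refine ⟨G.edgeSet.ncard, ?_⟩
  rintro n ⟨M, -, rfl⟩
  exact Set.ncard_le_ncard M.edgeSet_subset G.edgeSet.toFinite

lemma exists_max_matching {V : Type*} [Fintype V] (G : SimpleGraph V) :
    ∃ M : SimpleGraph.Subgraph G, M.IsMatching ∧ M.edgeSet.ncard = matchNum G :=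
  Nat.sSup_mem (matchSet_nonempty G) (matchSet_bdd G)

/-- lift a subgraph of `G.deleteEdges s` to a subgraph of `G`. -/
def liftSub {V : Type*} {G : SimpleGraph V} {s : Set (Sym2 V)}
    (M : (G.deleteEdges s).Subgraph) : G.Subgraph where
  verts := M.verts
  Adj := M.Adj
  adj_sub h := ((SimpleGraph.deleteEdges_adj).1 (M.adj_sub h)).1
  edge_vert h := M.edge_vert h
  symm := M.symm

/-- push a subgraph of `G` avoiding `e` to a subgraph of `G.deleteEdges {e}`. -/
def pushSub {V : Type*} {G : SimpleGraph V} (e : Sym2 V) (M : G.Subgraph)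
    (he : e ∉ M.edgeSet) : (G.deleteEdges {e}).Subgraph where
  verts := M.verts
  Adj := M.Adj
  adj_sub h := SimpleGraph.deleteEdges_adj.2 ⟨M.adj_sub h, by
    simp only [Set.mem_singleton_iff]
    rintro rfl
    exact he (SimpleGraph.Subgraph.mem_edgeSet.2 h)⟩
  edge_vert h := M.edge_vert h
  symm := M.symm

lemma exists_edge_not_in_matching {V : Type*} {G : SimpleGraph V} {v : V}
    (M : G.Subgraph) (hM : M.IsMatching)
    (c : G.Walk v v) (hc : c.IsCycle) :
    ∃ e ∈ c.edges, e ∉ M.edgeSet := by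
  cases c with
  | nil => exact absurd rfl hc.ne_nil
  | @cons _ b _ h p =>
    cases p with
    | nil => simpa using hc.three_le_length
    | @cons _ d _ h' q =>
      by_contra hcon
      push_neg at hcon
      have h1 : M.Adj v b := SimpleGraph.Subgraph.mem_edgeSet.1 (hcon _ (by simp))
      have h2 : M.Adj b d := SimpleGraph.Subgraph.mem_edgeSet.1
        (hcon s(b,d) (by simp))
      have hb : b ∈ M.verts := M.edge_vert h2
      obtain ⟨w, hw, huniq⟩ := hM hb
      have hvd : v = d := (huniq v h1.symm).trans (huniq d h2).symm
      subst hvd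
      have := hc.edges_nodup
      simp [Sym2.eq_swap] at this

end Aux

theorem stmt6 {V : Type*} [Fintype V] (G : SimpleGraph V)
    (hconn : G.Connected) (huni : G.edgeSet.ncard = Fintype.card V)
    {v : V} (c : G.Walk v v) (hc : c.IsCycle) :
    ∃ e ∈ c.edges, matchNum (G.deleteEdges {e}) = matchNum G := by
  obtain ⟨M, hM, hMcard⟩ := exists_max_matching G
  obtain ⟨e, he, heM⟩ := exists_edge_not_in_matching M hM c hc
  refine ⟨e, he, le_antisymm ?_ ?_⟩
  · apply csSup_le_csSup (matchSet_bdd G) (matchSet_nonempty _)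
    rintro n ⟨N, hN, rfl⟩
    exact ⟨liftSub N, hN, rfl⟩
  · rw [← hMcard]
    exact le_csSup (matchSet_bdd _) ⟨pushSub e M heM, hM, rfl⟩
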